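/- Let Θ ∈ U(Vec ℝ) satisfy e₋₁Θ − Θe₋₁ = 0 and e₀Θ − Θe₀ = nΘ for some integer n (i.e., Θ is a lowest weight element of weight n for the adjoint action). Then for every λ ∈ ℂ: (i) if n > 0, then π_λ(Θ) = 0; (ii) if n ≤ 0, then there is a scalar c ∈ ℂ such that π_λ(Θ) is the operator g ↦ c·g^{(−n)}, the c-multiple of the (−n)-th derivative operator on ℂ[x]. -/

import Mathlib

open Polynomial

attribute [local instance 100] LieRing.ofAssociativeRing

noncomputable section

abbrev VecR : Type := Derivation ℂ (Polynomial ℂ) (Polynomial ℂ)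

def eVF (n : ℤ) : VecR := Polynomial.mkDerivation ℂ (X ^ (n + 1).toNat)

lemma vecR_apply (D : VecR) (f : Polynomial ℂ) :
    D f = derivative f * D X := by
  have h : D = Polynomial.mkDerivation ℂ (D X) :=
    Polynomial.derivation_ext (by rw [Polynomial.mkDerivation_X])
  conv_lhs => rw [h]
  rw [Polynomial.mkDerivation_apply]
  simp [smul_eq_mul, mul_comm]

def piL (lam : ℂ) : VecR →ₗ⁅ℂ⁆ Module.End ℂ (Polynomial ℂ) where
  toFun D := D.toLinearMap + lam • (LinearMap.mulLeft ℂ (derivative (D X)))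
  map_add' D1 D2 := by
    refine LinearMap.ext fun g => ?_
    simp only [LinearMap.add_apply, LinearMap.smul_apply, LinearMap.mulLeft_apply,
      Derivation.coeFn_coe, Derivation.add_apply, map_add, smul_eq_C_mul]
    ring
  map_smul' c D := by
    refine LinearMap.ext fun g => ?_
    simp only [RingHom.id_apply, LinearMap.add_apply, LinearMap.smul_apply,
      LinearMap.mulLeft_apply, Derivation.coeFn_coe, Derivation.smul_apply,
      map_smul, smul_eq_C_mul, derivative_C_mul]
    ring
  map_lie' {D1 D2} := by
    refine LinearMap.ext fun g => ?_
    simp only [LieHom.lie_apply, Ring.lie_def, Module.End.mul_apply, map_add, map_smul,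
      LinearMap.add_apply, LinearMap.sub_apply, LinearMap.smul_apply,
      Derivation.coeFn_coe, LinearMap.mulLeft_apply,
      Derivation.commutator_apply, Derivation.map_add, Derivation.map_smul]
    rw [vecR_apply D1 (D2 g), vecR_apply D2 (D1 g),
      vecR_apply D1 (derivative (D2 X) * g), vecR_apply D2 (derivative (D1 X) * g),
      vecR_apply D1 (D2 X), vecR_apply D2 (D1 X),
      vecR_apply D1 g, vecR_apply D2 g]
    simp only [derivative_sub, derivative_add, derivative_neg, derivative_mul, smul_eq_C_mul]
    ring

end
noncomputable section

/-- The universal enveloping algebra of `Vec ℝ`. -/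
abbrev UVec : Type := UniversalEnvelopingAlgebra ℂ VecR

/-- The image of `e n` in the universal enveloping algebra. -/
def eU (n : ℤ) : UVec := UniversalEnvelopingAlgebra.ι ℂ (eVF n)

/-- The extension of `π_λ` to an algebra homomorphism on `U(Vec ℝ)`. -/
def piU (lam : ℂ) : UVec →ₐ[ℂ] Module.End ℂ (Polynomial ℂ) :=
  UniversalEnvelopingAlgebra.lift ℂ (piL lam)

/-- The annihilator of the tensor density module `ℱ_λ`. -/
def AnnF (lam : ℂ) : Submodule ℂ UVec := LinearMap.ker (piU lam).toLinearMap

end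

section Aux
open Polynomial

lemma coeff_eq_zero_of_X_mul_deriv (p : Polynomial ℂ) (a : ℂ)
    (h : X * derivative p = a • p) (j : ℕ) (hj : (j:ℂ) ≠ a) : p.coeff j = 0 := by
  have hc := congrArg (fun q => q.coeff j) h
  simp only [coeff_smul, smul_eq_mul] at hc
  cases j with
  | zero =>
    rw [mul_coeff_zero, coeff_X_zero, zero_mul] at hc
    have : a * p.coeff 0 = 0 := hc.symm
    rcases mul_eq_zero.mp this with h' | h'
    · exact absurd h'.symm (by simpa using hj)
    · exact h'
  | succ k =>
    rw [coeff_X_mul, coeff_derivative] at hc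
    have : (((k:ℂ)+1) - a) * p.coeff (k+1) = 0 := by linear_combination hc
    rcases mul_eq_zero.mp this with h' | h'
    · exact absurd (by push_cast; linear_combination h' : ((k+1 : ℕ):ℂ) = a) hj
    · exact h'

lemma eq_of_deriv_eq (p q : Polynomial ℂ) (hd : derivative p = derivative q)
    (h0 : p.coeff 0 = q.coeff 0) : p = q := by
  ext j
  cases j with
  | zero => exact h0
  | succ k =>
    have := congrArg (fun r => r.coeff k) hd
    simp only [coeff_derivative] at this
    have hk : ((k:ℂ)+1) ≠ 0 := by exact_mod_cast Nat.succ_ne_zero k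
    exact mul_right_cancel₀ hk this

lemma piL_apply' (lam : ℂ) (D : VecR) (g : Polynomial ℂ) :
    (piL lam D : Module.End ℂ (Polynomial ℂ)) g = D g + lam • (derivative (D X) * g) := rfl

lemma eVF_X (n : ℤ) : eVF n X = X ^ (n+1).toNat := Polynomial.mkDerivation_X ℂ _

lemma piU_eU_neg_one (lam : ℂ) (g : Polynomial ℂ) :
    piU lam (eU (-1)) g = derivative g := by
  rw [eU, piU, UniversalEnvelopingAlgebra.lift_ι_apply, piL_apply', vecR_apply, eVF_X]
  norm_num

lemma piU_eU_zero (lam : ℂ) (g : Polynomial ℂ) :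
    piU lam (eU 0) g = X * derivative g + lam • g := by
  rw [eU, piU, UniversalEnvelopingAlgebra.lift_ι_apply, piL_apply', vecR_apply, eVF_X]
  norm_num
  ring_nf

end Aux

/-- If `Θ ∈ U(Vec ℝ)` is a lowest weight element of weight `n` for the adjoint
action (`[e₋₁, Θ] = 0` and `[e₀, Θ] = nΘ`), then for every `λ`: if `n > 0` then
`π_λ(Θ) = 0`, and if `n ≤ 0` then `π_λ(Θ)` is a scalar multiple of the
`(−n)`-th derivative operator on `ℂ[x]`. -/
theorem lowest_weight_action (Θ : UVec) (n : ℤ)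
    (h1 : eU (-1) * Θ - Θ * eU (-1) = 0)
    (h0 : eU 0 * Θ - Θ * eU 0 = (n : ℂ) • Θ) (lam : ℂ) :
    (0 < n → piU lam Θ = 0) ∧
    (n ≤ 0 → ∃ c : ℂ,
      piU lam Θ = c • ((Polynomial.derivative : Module.End ℂ (Polynomial ℂ)) ^ (-n).toNat)) := by
  set T : Module.End ℂ (Polynomial ℂ) := piU lam Θ with hTdef
  have hcom : ∀ g : Polynomial ℂ, derivative (T g) = T (derivative g) := by
    intro g
    have h := congrArg (fun u => (piU lam u) g) h1
    simp only [map_sub, map_mul, map_zero, LinearMap.sub_apply, Module.End.mul_apply,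
      LinearMap.zero_apply] at h
    rw [← hTdef] at h
    simp only [piU_eU_neg_one] at h
    exact sub_eq_zero.mp h
  have hwt : ∀ g : Polynomial ℂ,
      X * derivative (T g) - T (X * derivative g) = (n:ℂ) • T g := by
    intro g
    have h := congrArg (fun u => (piU lam u) g) h0
    simp only [map_sub, map_mul, map_smul, LinearMap.sub_apply, Module.End.mul_apply,
      LinearMap.smul_apply] at h
    rw [← hTdef] at h
    simp only [piU_eU_zero] at h
    rw [map_add, map_smul] at h
    simp only [smul_eq_C_mul] at h ⊢
    linear_combination h
  have hdXp : ∀ k : ℕ, derivative (X ^ (k+1) : Polynomial ℂ) = ((k:ℂ)+1) • X ^ k := by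
    intro k
    rw [derivative_X_pow]
    push_cast
    simp [smul_eq_C_mul]
  have hA : ∀ k : ℕ, X * derivative (T (X ^ k)) = ((n:ℂ) + k) • T (X ^ k) := by
    intro k
    have hxd : X * derivative (X ^ k : Polynomial ℂ) = (k:ℂ) • X ^ k := by
      cases k with
      | zero => simp
      | succ j =>
        rw [hdXp j]
        push_cast
        rw [smul_eq_C_mul, smul_eq_C_mul]
        ring
    have h := hwt (X ^ k)
    rw [hxd, map_smul] at h
    simp only [smul_eq_C_mul, Polynomial.C_add] at h ⊢
    linear_combination h
  have hcoeff : ∀ k j : ℕ, (j:ℤ) ≠ n + k → (T (X ^ k)).coeff j = 0 := by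
    intro k j hj
    refine coeff_eq_zero_of_X_mul_deriv _ _ (hA k) j ?_
    intro hcontra
    apply hj
    have : ((j:ℤ) : ℂ) = (((n + k : ℤ)) : ℂ) := by push_cast; push_cast at hcontra; exact hcontra
    exact_mod_cast this
  have hB : ∀ k : ℕ, derivative (T (X ^ (k+1))) = ((k:ℂ)+1) • T (X ^ k) := by
    intro k
    rw [hcom, hdXp k, map_smul]
  have hzero : ∀ k : ℕ, 0 < n + k → derivative (T (X ^ k)) = 0 → T (X ^ k) = 0 := by
    intro k hk hd
    have hC := Polynomial.eq_C_of_derivative_eq_zero hd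
    rw [hC, hcoeff k 0 (by omega), map_zero]
  constructor
  · intro hn
    have hqz : ∀ k : ℕ, T (X ^ k) = 0 := by
      intro k
      induction k with
      | zero =>
        refine hzero 0 (by simpa using hn) ?_
        rw [hcom]
        simp
      | succ k ih =>
        refine hzero (k+1) (by push_cast; omega) ?_
        rw [hB k, ih, smul_zero]
    refine LinearMap.ext fun g => ?_
    simp only [LinearMap.zero_apply]
    induction g using Polynomial.induction_on' with
    | add p r hp hr => rw [map_add, hp, hr, add_zero]
    | monomial k a =>
      rw [← C_mul_X_pow_eq_monomial, ← smul_eq_C_mul, map_smul, hqz k, smul_zero]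
  · intro hn
    set m : ℕ := (-n).toNat with hm
    have hnm : n = -(m:ℤ) := by omega
    have hfac : (Nat.factorial m : ℂ) ≠ 0 := by exact_mod_cast m.factorial_ne_zero
    refine ⟨(T (X ^ m)).coeff 0 / (Nat.factorial m : ℂ), ?_⟩
    set c : ℂ := (T (X ^ m)).coeff 0 / (Nat.factorial m : ℂ) with hc
    have hsmall : ∀ k : ℕ, k < m → T (X ^ k) = 0 := by
      intro k hk
      ext j
      rw [Polynomial.coeff_zero]
      exact hcoeff k j (by omega)
    have hsmall' : ∀ k : ℕ, k < m → (derivative^[m] (X ^ k : Polynomial ℂ)) = 0 := by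
      intro k hk
      apply Polynomial.iterate_derivative_eq_zero
      simpa using hk
    have hmid : T (X ^ m) = c • derivative^[m] (X ^ m : Polynomial ℂ) := by
      have h1' : T (X ^ m) = Polynomial.C ((T (X ^ m)).coeff 0) := by
        ext j
        cases j with
        | zero => simp
        | succ i =>
          rw [Polynomial.coeff_C, if_neg (Nat.succ_ne_zero i)]
          exact hcoeff m (i+1) (by omega)
      rw [h1', Polynomial.iterate_derivative_X_pow_eq_smul, Nat.descFactorial_self,
        Nat.sub_self, pow_zero, smul_smul, hc, div_mul_cancel₀ _ hfac]
      rw [smul_eq_C_mul, mul_one]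
    have hbig : ∀ k : ℕ, m ≤ k → T (X ^ k) = c • derivative^[m] (X ^ k : Polynomial ℂ) →
        T (X ^ (k+1)) = c • derivative^[m] (X ^ (k+1) : Polynomial ℂ) := by
      intro k hk ih
      apply eq_of_deriv_eq
      · rw [hB k, ih, derivative_smul]
        have hcd : derivative (derivative^[m] (X ^ (k+1) : Polynomial ℂ))
            = derivative^[m] (derivative (X ^ (k+1) : Polynomial ℂ)) := by
          rw [← Function.iterate_succ_apply' derivative m,
            Function.iterate_succ_apply derivative m]
        rw [hcd, hdXp k, Polynomial.iterate_derivative_smul]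
        rw [smul_comm]
      · have hl : (T (X ^ (k+1))).coeff 0 = 0 := hcoeff (k+1) 0 (by omega)
        have hne : ¬ ((0:ℕ) = k + 1 - m) := by omega
        rw [hl, Polynomial.coeff_smul, Polynomial.iterate_derivative_X_pow_eq_smul,
          Polynomial.coeff_smul, Polynomial.coeff_X_pow, if_neg hne]
        simp
    have key : ∀ k : ℕ, T (X ^ k) = c • derivative^[m] (X ^ k : Polynomial ℂ) := by
      intro k
      induction k with
      | zero =>
        rcases Nat.eq_zero_or_pos m with h' | h'
        · rw [← h']
          exact hmid
        · rw [hsmall 0 h', hsmall' 0 h', smul_zero]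
      | succ k ih =>
        rcases lt_trichotomy (k+1) m with h' | h' | h'
        · rw [hsmall _ h', hsmall' _ h', smul_zero]
        · rw [h']
          exact hmid
        · exact hbig k (by omega) ih
    refine LinearMap.ext fun g => ?_
    induction g using Polynomial.induction_on' with
    | add p r hp hr => rw [map_add, map_add, hp, hr]
    | monomial k a =>
      rw [← C_mul_X_pow_eq_monomial, ← smul_eq_C_mul, map_smul, map_smul, key k,
        LinearMap.smul_apply, Module.End.pow_apply]
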